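/- Fix 3×3 permutation matrices σ, τ₀, τ₁. For Lebesgue-almost every point (x,y) of the triangle Δ = {(x,y) ∈ ℝ² : 1 > x > y > 0} the following holds: every sequence i : ℕ → {0,1} such that (x,y) ∈ Γ_{(σ,τ₀,τ₁)}(i₁,…,iₙ) for all n ≥ 1 satisfies lim_{n→∞} (1/n)·#{k ≤ n : i_k = 1} = 1/2. That is, almost every point has a normal barycentric TRIP sequence. -/

import Mathlib

open Matrix MeasureTheory Filter
open scoped ENNReal

noncomputable section

/-- Projection π(a,b,c) = (b/a, c/a). -/
def projPt (v : Fin 3 → ℝ) : ℝ × ℝ := (v 1 / v 0, v 2 / v 0)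

def Vmat : Matrix (Fin 3) (Fin 3) ℝ := !![1,1,1; 0,1,1; 0,0,1]

def prodSeq (C : Fin 2 → Matrix (Fin 3) (Fin 3) ℝ) (i : ℕ → Fin 2) :
    ℕ → Matrix (Fin 3) (Fin 3) ℝ
  | 0 => 1
  | n + 1 => prodSeq C i n * C (i (n + 1))

/-- The subtriangle: convex hull of the π-images of the columns of V·C_{i₁}⋯C_{iₙ}. -/
def subTri (C : Fin 2 → Matrix (Fin 3) (Fin 3) ℝ) (i : ℕ → Fin 2) (n : ℕ) :
    Set (ℝ × ℝ) :=
  convexHull ℝ (Set.range fun j : Fin 3 => projPt fun k => (Vmat * prodSeq C i n) k j)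

/-- The permutation matrix of a permutation of {0,1,2}. -/
def permMat (p : Equiv.Perm (Fin 3)) : Matrix (Fin 3) (Fin 3) ℝ :=
  Matrix.of fun i j => if p j = i then 1 else 0

def G0 : Matrix (Fin 3) (Fin 3) ℝ := !![0,0,1/2; 1,0,0; 0,1,1/2]
def G1 : Matrix (Fin 3) (Fin 3) ℝ := !![1,0,1/2; 0,1,0; 0,0,1/2]

def Gtrip (σ τ0 τ1 : Matrix (Fin 3) (Fin 3) ℝ) : Fin 2 → Matrix (Fin 3) (Fin 3) ℝ :=
  ![σ * G0 * τ0, σ * G1 * τ1]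

/-! ### Auxiliary material -/

-- column sums
def colSum (M : Matrix (Fin 3) (Fin 3) ℝ) (j : Fin 3) : ℝ := ∑ k, M k j

lemma colSum_mul (A B : Matrix (Fin 3) (Fin 3) ℝ) (hA : ∀ l, colSum A l = 1) (j : Fin 3) :
    colSum (A * B) j = colSum B j := by
  unfold colSum at *
  simp only [Matrix.mul_apply]
  rw [Finset.sum_comm]
  simp only [← Finset.sum_mul]
  simp only [show ∀ l, ∑ k, A k l = 1 from hA, one_mul]

lemma colSum_permMat (p : Equiv.Perm (Fin 3)) (j : Fin 3) : colSum (permMat p) j = 1 := by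
  unfold colSum permMat
  simp

lemma colSum_G0 (j : Fin 3) : colSum G0 j = 1 := by
  fin_cases j <;> norm_num [colSum, G0, Fin.sum_univ_three, Matrix.vecHead, Matrix.vecTail, Matrix.cons_val_two]

lemma colSum_G1 (j : Fin 3) : colSum G1 j = 1 := by
  fin_cases j <;> norm_num [colSum, G1, Fin.sum_univ_three, Matrix.vecHead, Matrix.vecTail, Matrix.cons_val_two]

lemma colSum_Gtrip (p q r : Equiv.Perm (Fin 3)) (b : Fin 2) (j : Fin 3) :
    colSum (Gtrip (permMat p) (permMat q) (permMat r) b) j = 1 := by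
  fin_cases b
  · show colSum (permMat p * G0 * permMat q) j = 1
    rw [Matrix.mul_assoc, colSum_mul _ _ (colSum_permMat p),
      colSum_mul _ _ colSum_G0]
    exact colSum_permMat q j
  · show colSum (permMat p * G1 * permMat r) j = 1
    rw [Matrix.mul_assoc, colSum_mul _ _ (colSum_permMat p),
      colSum_mul _ _ colSum_G1]
    exact colSum_permMat r j

lemma colSum_prodSeq (p q r : Equiv.Perm (Fin 3)) (i : ℕ → Fin 2) (n : ℕ) (j : Fin 3) :
    colSum (prodSeq (Gtrip (permMat p) (permMat q) (permMat r)) i n) j = 1 := by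
  induction n generalizing j with
  | zero => simp [prodSeq, colSum, Matrix.one_apply]
  | succ n ih =>
      show colSum (_ * _) j = 1
      rw [colSum_mul _ _ ih]
      exact colSum_Gtrip p q r _ j

-- determinants
lemma det_permMat (p : Equiv.Perm (Fin 3)) : |det (permMat p)| = 1 := by
  have : permMat p = (Equiv.Perm.permMatrix ℝ p)ᵀ := by
    ext i j
    simp [permMat, Equiv.Perm.permMatrix, PEquiv.toMatrix, Equiv.toPEquiv, eq_comm]
  rw [this, Matrix.det_transpose, Matrix.det_permutation]
  rcases Int.units_eq_one_or (Equiv.Perm.sign p) with h | h <;> simp [h]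

lemma det_Gtrip (p q r : Equiv.Perm (Fin 3)) (b : Fin 2) :
    |det (Gtrip (permMat p) (permMat q) (permMat r) b)| = 1/2 := by
  have h0 : det G0 = 1/2 := by
    norm_num [G0, Matrix.det_fin_three, Matrix.vecHead, Matrix.vecTail, Matrix.cons_val_two]
  have h1 : det G1 = 1/2 := by
    norm_num [G1, Matrix.det_fin_three, Matrix.vecHead, Matrix.vecTail, Matrix.cons_val_two]
  fin_cases b
  · show |det (permMat p * G0 * permMat q)| = 1/2
    rw [Matrix.det_mul, Matrix.det_mul, abs_mul, abs_mul, det_permMat, det_permMat, h0]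
    norm_num
  · show |det (permMat p * G1 * permMat r)| = 1/2
    rw [Matrix.det_mul, Matrix.det_mul, abs_mul, abs_mul, det_permMat, det_permMat, h1]
    norm_num

lemma det_prodSeq (p q r : Equiv.Perm (Fin 3)) (i : ℕ → Fin 2) (n : ℕ) :
    |det (prodSeq (Gtrip (permMat p) (permMat q) (permMat r)) i n)| = (1/2)^n := by
  induction n with
  | zero => simp [prodSeq]
  | succ n ih =>
      show |det (_ * _)| = _
      rw [Matrix.det_mul, abs_mul, ih, det_Gtrip, pow_succ]

-- geometry: triangle area bound
lemma vol_hull (P : Fin 3 → ℝ × ℝ) :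
    volume (convexHull ℝ (Set.range P)) ≤
      ENNReal.ofReal |((P 1).1-(P 0).1)*((P 2).2-(P 0).2)
        - ((P 2).1-(P 0).1)*((P 1).2-(P 0).2)| := by
  set a := (P 1).1-(P 0).1
  set b := (P 2).1-(P 0).1
  set c := (P 1).2-(P 0).2
  set d := (P 2).2-(P 0).2
  set M : Matrix (Fin 2) (Fin 2) ℝ := !![a, b; c, d] with hM
  set B := Module.Basis.finTwoProd ℝ
  set f : (ℝ × ℝ) →ₗ[ℝ] (ℝ × ℝ) := Matrix.toLin B B M with hf
  have hdet : LinearMap.det f = a*d - b*c := by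
    rw [hf, LinearMap.det_toLin, hM, Matrix.det_fin_two_of]
  have hf0 : f (Module.Basis.finTwoProd ℝ 0) = (a, c) := by
    rw [hf, Matrix.toLin_self]
    simp [B, Fin.sum_univ_two, Module.Basis.finTwoProd_zero, Module.Basis.finTwoProd_one, hM,
      Prod.ext_iff]
  have hf1 : f (Module.Basis.finTwoProd ℝ 1) = (b, d) := by
    rw [hf, Matrix.toLin_self]
    simp [B, Fin.sum_univ_two, Module.Basis.finTwoProd_zero, Module.Basis.finTwoProd_one, hM,
      Prod.ext_iff]
  set sq : Set (ℝ × ℝ) := Set.Icc (0:ℝ) 1 ×ˢ Set.Icc (0:ℝ) 1 with hsq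
  set S : Set (ℝ × ℝ) := (fun z => P 0 + z) '' (f '' sq) with hS
  have hconv : Convex ℝ S :=
    (((convex_Icc (0:ℝ) 1).prod (convex_Icc 0 1)).linear_image f).translate (P 0)
  have hsub : convexHull ℝ (Set.range P) ⊆ S := by
    apply convexHull_min _ hconv
    rintro - ⟨j, rfl⟩
    fin_cases j
    · exact ⟨f (0, 0), ⟨(0,0), by constructor <;> simp, rfl⟩, by simp [show ((0:ℝ), (0:ℝ)) = 0 from rfl]⟩
    · refine ⟨f (1, 0), ⟨(1,0), by constructor <;> simp, rfl⟩, ?_⟩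
      have : ((1:ℝ), (0:ℝ)) = Module.Basis.finTwoProd ℝ 0 := by simp [Module.Basis.finTwoProd_zero]
      rw [this, hf0]
      show P 0 + (a, c) = P 1
      simp [a, c, Prod.ext_iff]
    · refine ⟨f (0, 1), ⟨(0,1), by constructor <;> simp, rfl⟩, ?_⟩
      have : ((0:ℝ), (1:ℝ)) = Module.Basis.finTwoProd ℝ 1 := by simp [Module.Basis.finTwoProd_one]
      rw [this, hf1]
      show P 0 + (b, d) = P 2
      simp [b, d, Prod.ext_iff]
  calc volume (convexHull ℝ (Set.range P)) ≤ volume S := measure_mono hsub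
    _ = volume (f '' sq) := by
        rw [hS, Set.image_add_left, measure_preimage_add]
    _ = ENNReal.ofReal |LinearMap.det f| * volume sq :=
        Measure.addHaar_image_linearMap volume f sq
    _ ≤ ENNReal.ofReal |a*d - b*c| := by
        rw [hdet, hsq, Measure.volume_eq_prod, Measure.prod_prod, Real.volume_Icc]
        simp

lemma vol_subTri (p q r : Equiv.Perm (Fin 3)) (i : ℕ → Fin 2) (n : ℕ) :
    volume (subTri (Gtrip (permMat p) (permMat q) (permMat r)) i n)
      ≤ ENNReal.ofReal ((1/2)^n) := by
  set A := prodSeq (Gtrip (permMat p) (permMat q) (permMat r)) i n with hA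
  set M := Vmat * A with hMdef
  have h0 : ∀ j, M 0 j = 1 := by
    intro j
    have hcs := colSum_prodSeq p q r i n j
    unfold colSum at hcs
    rw [hMdef]
    simp only [Matrix.mul_apply, Vmat, Fin.sum_univ_three] at *
    norm_num [Matrix.vecHead, Matrix.vecTail, Matrix.cons_val_two]
    linarith [hcs]
  have hP : (fun j : Fin 3 => projPt fun k => M k j)
      = fun j : Fin 3 => (M 1 j, M 2 j) := by
    funext j
    simp [projPt, h0 j]
  unfold subTri
  rw [← hA, ← hMdef, hP]
  refine (vol_hull _).trans ?_
  have key : ((M 1 1, M 2 1).1 - (M 1 0, M 2 0).1) * ((M 1 2, M 2 2).2 - (M 1 0, M 2 0).2)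
      - ((M 1 2, M 2 2).1 - (M 1 0, M 2 0).1) * ((M 1 1, M 2 1).2 - (M 1 0, M 2 0).2)
      = det M := by
    rw [Matrix.det_fin_three, h0 0, h0 1, h0 2]
    ring
  have hdV : det Vmat = 1 := by
    norm_num [Vmat, Matrix.det_fin_three, Matrix.vecHead, Matrix.vecTail, Matrix.cons_val_two]
  have hdM : |det M| = (1/2:ℝ)^n := by
    rw [hMdef, Matrix.det_mul, hdV, one_mul, hA, det_prodSeq]
  simp only [key, hdM, le_refl]

-- prodSeq only depends on digits 1..n
lemma prodSeq_congr (C : Fin 2 → Matrix (Fin 3) (Fin 3) ℝ) (i i' : ℕ → Fin 2) (n : ℕ)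
    (h : ∀ k, 1 ≤ k → k ≤ n → i k = i' k) : prodSeq C i n = prodSeq C i' n := by
  induction n with
  | zero => rfl
  | succ n ih =>
      show prodSeq C i n * C (i (n+1)) = prodSeq C i' n * C (i' (n+1))
      rw [ih (fun k h1 h2 => h k h1 (h2.trans (Nat.le_succ n))),
        h (n+1) (Nat.le_add_left 1 n) le_rfl]

def extSeq {n : ℕ} (s : Fin n → Fin 2) : ℕ → Fin 2 :=
  fun k => if h : k - 1 < n then s ⟨k-1, h⟩ else 0

lemma subTri_ext (C : Fin 2 → Matrix (Fin 3) (Fin 3) ℝ) (i : ℕ → Fin 2) (n : ℕ) :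
    subTri C i n = subTri C (extSeq fun j : Fin n => i ((j : ℕ)+1)) n := by
  unfold subTri
  rw [prodSeq_congr C i (extSeq fun j : Fin n => i ((j : ℕ)+1)) n]
  intro k h1 h2
  have hk : k - 1 < n := by omega
  simp only [extSeq, dif_pos hk]
  congr 1
  omega

-- counting
def rad (b : Fin 2) : ℝ := if b = 1 then 1 else -1

def Ysum {n : ℕ} (s : Fin n → Fin 2) : ℝ := ∑ j, rad (s j)

lemma sum_split {n : ℕ} (F : (Fin (n+1) → Fin 2) → ℝ) :
    ∑ s : Fin (n+1) → Fin 2, F s = ∑ b : Fin 2, ∑ t : Fin n → Fin 2, F (Fin.cons b t) := by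
  calc ∑ s : Fin (n+1) → Fin 2, F s
      = ∑ p : Fin 2 × (Fin n → Fin 2), F (Fin.cons p.1 p.2) :=
        (Fintype.sum_equiv (Fin.consEquiv fun _ => Fin 2) _ _ (fun ⟨b, t⟩ => rfl)).symm
    _ = ∑ b : Fin 2, ∑ t : Fin n → Fin 2, F (Fin.cons b t) := Fintype.sum_prod_type _

lemma Ysum_cons {n : ℕ} (b : Fin 2) (t : Fin n → Fin 2) :
    Ysum (Fin.cons b t) = rad b + Ysum t := by
  unfold Ysum
  rw [Fin.sum_univ_succ]
  simp

lemma moment2 (n : ℕ) : ∑ s : Fin n → Fin 2, (Ysum s)^2 = n * 2^n := by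
  induction n with
  | zero => simp [Ysum]
  | succ n ih =>
      rw [sum_split (fun s => (Ysum s)^2)]
      have h : ∀ b : Fin 2, (rad b)^2 = 1 := by intro b; fin_cases b <;> norm_num [rad]
      have h2 : ∀ b : Fin 2, ∑ t : Fin n → Fin 2, (Ysum (Fin.cons b t))^2
          = ∑ t : Fin n → Fin 2, ((Ysum t)^2 + 2 * rad b * Ysum t + 1) := by
        intro b
        refine Finset.sum_congr rfl fun t _ => ?_
        rw [Ysum_cons]
        nlinarith [h b]
      rw [Fin.sum_univ_two, h2 0, h2 1]
      simp only [Finset.sum_add_distrib, ← Finset.mul_sum, ih]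
      have : rad 0 = -1 ∧ rad 1 = 1 := by constructor <;> rfl
      rw [this.1, this.2]
      simp only [Finset.sum_const, Finset.card_univ, Fintype.card_pi, Fintype.card_fin,
        Finset.prod_const, nsmul_eq_mul]
      push_cast
      ring

lemma moment4 (n : ℕ) : ∑ s : Fin n → Fin 2, (Ysum s)^4 = (3*(n:ℝ)^2 - 2*n) * 2^n := by
  induction n with
  | zero => simp [Ysum]
  | succ n ih =>
      rw [sum_split (fun s => (Ysum s)^4)]
      have h : ∀ b : Fin 2, (rad b)^2 = 1 := by intro b; fin_cases b <;> norm_num [rad]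
      have h2 : ∀ b : Fin 2, ∑ t : Fin n → Fin 2, (Ysum (Fin.cons b t))^4
          = ∑ t : Fin n → Fin 2, ((Ysum t)^4 + 4 * rad b * (Ysum t)^3
              + 6 * (Ysum t)^2 + 4 * rad b * Ysum t + 1) := by
        intro b
        refine Finset.sum_congr rfl fun t _ => ?_
        rw [Ysum_cons]
        nlinarith [h b, sq_nonneg (Ysum t), sq_nonneg (rad b + Ysum t)]
      rw [Fin.sum_univ_two, h2 0, h2 1]
      have hr : rad 0 = -1 ∧ rad 1 = 1 := by constructor <;> rfl
      simp only [Finset.sum_add_distrib, ← Finset.mul_sum, ih, hr.1, hr.2, moment2]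
      simp only [Finset.sum_const, Finset.card_univ, Fintype.card_pi, Fintype.card_fin,
        Finset.prod_const, nsmul_eq_mul]
      push_cast
      ring

open scoped Classical in
lemma count_bad (n : ℕ) (ε : ℝ) (hε : 0 ≤ ε) :
    ((Finset.univ.filter fun s : Fin n → Fin 2 => 2*ε*n ≤ |Ysum s|).card : ℝ) * (2*ε*n)^4
      ≤ (3*(n:ℝ)^2) * 2^n := by
  classical
  have hnn : (0:ℝ) ≤ 2*ε*n := by positivity
  have step1 : ((Finset.univ.filter fun s : Fin n → Fin 2 => 2*ε*n ≤ |Ysum s|).card : ℝ)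
      * (2*ε*n)^4 ≤ ∑ s : Fin n → Fin 2, (Ysum s)^4 := by
    rw [Finset.card_eq_sum_ones, Nat.cast_sum, Finset.sum_mul]
    have mono : ∑ s ∈ (Finset.univ.filter fun s : Fin n → Fin 2 => 2*ε*n ≤ |Ysum s|),
        (Ysum s)^4 ≤ ∑ s : Fin n → Fin 2, (Ysum s)^4 :=
      Finset.sum_le_sum_of_subset_of_nonneg
        (Finset.filter_subset _ _) (fun s _ _ => by positivity)
    refine le_trans ?_ mono
    refine Finset.sum_le_sum fun s hs => ?_
    rw [Finset.mem_filter] at hs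
    have h1 : (2*ε*n)^4 ≤ |Ysum s|^4 := pow_le_pow_left₀ hnn hs.2 4
    have h2 : |Ysum s|^4 = (Ysum s)^4 := by
      rw [pow_abs, abs_of_nonneg (by positivity)]
    rw [h2] at h1
    push_cast
    linarith
  refine step1.trans ?_
  rw [moment4]
  have : (0:ℝ) ≤ 2*(n:ℝ) := by positivity
  nlinarith [pow_pos (show (0:ℝ) < 2 by norm_num) n]

open scoped Classical in
def badF (ε : ℝ) (n : ℕ) : Finset (Fin n → Fin 2) :=
  Finset.univ.filter fun s => 2*ε*n ≤ |Ysum s|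

def badSet (C : Fin 2 → Matrix (Fin 3) (Fin 3) ℝ) (ε : ℝ) (n : ℕ) : Set (ℝ × ℝ) :=
  ⋃ s ∈ badF ε n, subTri C (extSeq s) n

lemma vol_badSet (p q r : Equiv.Perm (Fin 3)) (ε : ℝ) (hε : 0 < ε) (n : ℕ) (hn : 1 ≤ n) :
    volume (badSet (Gtrip (permMat p) (permMat q) (permMat r)) ε n)
      ≤ ENNReal.ofReal (3/(16*ε^4) * (1/(n:ℝ)^2)) := by
  classical
  refine (measure_biUnion_finset_le _ _).trans ?_
  have each : ∀ s ∈ badF ε n,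
      volume (subTri (Gtrip (permMat p) (permMat q) (permMat r)) (extSeq s) n)
        ≤ ENNReal.ofReal ((1/2)^n) := fun s _ => vol_subTri p q r _ n
  calc ∑ s ∈ badF ε n, volume (subTri (Gtrip (permMat p) (permMat q) (permMat r)) (extSeq s) n)
      ≤ ∑ t ∈ badF ε n, ENNReal.ofReal ((1/2)^n) := Finset.sum_le_sum each
    _ = ((badF ε n).card : ℝ≥0∞) * ENNReal.ofReal ((1/2)^n) := by
        rw [Finset.sum_const, nsmul_eq_mul]
    _ = ENNReal.ofReal (((badF ε n).card : ℝ) * (1/2)^n) := by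
        rw [ENNReal.ofReal_mul (by positivity), ENNReal.ofReal_natCast]
    _ ≤ ENNReal.ofReal (3/(16*ε^4) * (1/(n:ℝ)^2)) := by
        apply ENNReal.ofReal_le_ofReal
        have hc := count_bad n ε hε.le
        have e1 : (2*ε*(n:ℝ))^4 = 16*ε^4*(n:ℝ)^4 := by ring
        rw [e1] at hc
        have hn' : (0:ℝ) < n := by exact_mod_cast hn
        have h1 : ((badF ε n).card : ℝ) ≤ 3*(n:ℝ)^2*2^n / (16*ε^4*(n:ℝ)^4) := by
          rw [le_div_iff₀ (by positivity)]
          calc ((badF ε n).card : ℝ) * (16*ε^4*(n:ℝ)^4)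
              = ((Finset.univ.filter fun s : Fin n → Fin 2 => 2*ε*n ≤ |Ysum s|).card : ℝ)
                * (16*ε^4*(n:ℝ)^4) := by
                congr 2
            _ ≤ 3*(n:ℝ)^2 * 2^n := hc
        calc ((badF ε n).card : ℝ) * (1/2)^n
            ≤ (3*(n:ℝ)^2*2^n / (16*ε^4*(n:ℝ)^4)) * (1/2)^n :=
              mul_le_mul_of_nonneg_right h1 (by positivity)
          _ = 3/(16*ε^4) * (1/(n:ℝ)^2) := by
              rw [div_pow, one_pow]
              field_simp

lemma Ysum_eq {n : ℕ} (s : Fin n → Fin 2) :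
    Ysum s = 2 * ((Finset.univ.filter fun j => s j = 1).card : ℝ) - n := by
  classical
  unfold Ysum
  have : ∀ j, rad (s j) = 2 * (if s j = 1 then (1:ℝ) else 0) - 1 := by
    intro j
    by_cases h : s j = 1 <;> norm_num [rad, h]
  simp only [this, Finset.sum_sub_distrib, ← Finset.mul_sum, Finset.sum_boole,
    Finset.sum_const, Finset.card_univ, Fintype.card_fin, nsmul_eq_mul, mul_one]

lemma card_fin_range (n : ℕ) (i : ℕ → Fin 2) :
    (Finset.univ.filter fun j : Fin n => i ((j : ℕ)+1) = 1).card
      = ((Finset.range n).filter fun k => i (k+1) = 1).card := by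
  classical
  rw [Finset.card_filter, Finset.card_filter]
  exact Fin.sum_univ_eq_sum_range (fun k => if i (k+1) = 1 then 1 else 0) n

/-- For Lebesgue-almost every point of the triangle Δ = {1 > x > y > 0}, every
barycentric (σ,τ₀,τ₁) TRIP sequence of the point is normal: the frequency of ones
tends to 1/2. -/
theorem stmt11 (p q r : Equiv.Perm (Fin 3)) :
    ∀ᵐ z : ℝ × ℝ ∂volume,
      (z.2 < z.1 ∧ z.1 < 1 ∧ 0 < z.2) →
      ∀ i : ℕ → Fin 2,
        (∀ n : ℕ, 1 ≤ n → z ∈ subTri (Gtrip (permMat p) (permMat q) (permMat r)) i n) →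
        Tendsto
          (fun n : ℕ =>
            (((Finset.range n).filter fun k => i (k + 1) = 1).card : ℝ) / n)
          atTop (nhds (1 / 2)) := by
  classical
  set C := Gtrip (permMat p) (permMat q) (permMat r) with hC
  have key : ∀ m : ℕ, ∀ᵐ z : ℝ × ℝ ∂volume,
      ∀ᶠ n in atTop, z ∉ badSet C (1/(m+1)) (n+1) := by
    intro m
    set ε : ℝ := 1/(m+1) with hε
    have hεpos : 0 < ε := by positivity
    apply ae_eventually_notMem
    have hbd : ∀ n : ℕ, volume (badSet C ε (n+1))
        ≤ ENNReal.ofReal (3/(16*ε^4) * (1/((n:ℝ)+1)^2)) := by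
      intro n
      have := vol_badSet p q r ε hεpos (n+1) (Nat.le_add_left 1 n)
      rw [← hC] at this
      convert this using 3
      push_cast
      ring
    have hsummable : Summable (fun n : ℕ => 3/(16*ε^4) * (1/((n:ℝ)+1)^2)) := by
      apply Summable.mul_left
      have h2 : Summable (fun n : ℕ => 1/((n:ℝ))^2) :=
        (Real.summable_one_div_nat_pow).2 (by norm_num)
      have := (summable_nat_add_iff 1).2 h2
      simpa using this
    apply ne_top_of_le_ne_top
      (show ENNReal.ofReal (∑' n : ℕ, 3/(16*ε^4) * (1/((n:ℝ)+1)^2)) ≠ ⊤ from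
        ENNReal.ofReal_ne_top)
    calc ∑' n : ℕ, volume (badSet C ε (n+1))
        ≤ ∑' n : ℕ, ENNReal.ofReal (3/(16*ε^4) * (1/((n:ℝ)+1)^2)) :=
          ENNReal.tsum_le_tsum hbd
      _ = ENNReal.ofReal (∑' n : ℕ, 3/(16*ε^4) * (1/((n:ℝ)+1)^2)) :=
          (ENNReal.ofReal_tsum_of_nonneg (fun n => by positivity) hsummable).symm
  rw [← ae_all_iff] at key
  filter_upwards [key] with z hz _ i hadm
  rw [Metric.tendsto_atTop]
  intro δ hδ
  obtain ⟨m, hm⟩ := exists_nat_one_div_lt hδ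
  obtain ⟨N, hN⟩ := (eventually_atTop.1 (hz m))
  refine ⟨N + 1, fun n hn => ?_⟩
  have hn1 : 1 ≤ n := le_trans (Nat.le_add_left 1 N) hn
  have hnot : z ∉ badSet C (1/(m+1)) n := by
    have h1 : n - 1 ≥ N := by omega
    have := hN (n-1) h1
    have hrw : n - 1 + 1 = n := by omega
    rwa [hrw] at this
  set ε : ℝ := 1/(m+1) with hεdef
  set s : Fin n → Fin 2 := fun j => i ((j : ℕ)+1) with hs
  have hzin : z ∈ subTri C (extSeq s) n := by
    rw [hs, ← subTri_ext]
    exact hadm n hn1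
  have hgood : ¬ (2*ε*n ≤ |Ysum s|) := by
    intro hbad
    apply hnot
    have hmem : s ∈ badF ε n := by
      unfold badF
      exact Finset.mem_filter.2 ⟨Finset.mem_univ _, hbad⟩
    exact Set.mem_biUnion hmem hzin
  push_neg at hgood
  -- translate to the count
  have hY : Ysum s = 2 * ((((Finset.range n).filter fun k => i (k+1) = 1).card : ℝ)) - n := by
    rw [Ysum_eq, ← card_fin_range n i]
  set c : ℝ := (((Finset.range n).filter fun k => i (k+1) = 1).card : ℝ) with hc
  rw [hY] at hgood
  have hnpos : (0:ℝ) < n := by exact_mod_cast hn1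
  have hεδ : ε < δ := hm
  rw [Real.dist_eq]
  have heq : c/(n:ℝ) - 1/2 = (2*c - n)/(2*n) := by
    field_simp
  rw [heq, abs_div, abs_of_pos (by positivity : (0:ℝ) < 2*n), div_lt_iff₀ (by positivity)]
  calc |2*c - (n:ℝ)| < 2*ε*n := hgood
    _ ≤ δ * (2*n) := by nlinarith
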